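/- Let n be a real number with n ≠ 0 and n ≠ 2, let c₁, c₂ be nonzero real numbers, let J ⊆ (0,∞) be a nonempty open interval, and let E : J → ℝ be twice continuously differentiable with 0 < 1 − E′(ν)² for all ν ∈ J. Suppose f, g : J → ℝ are continuously differentiable and satisfy for all ν ∈ J: f′(ν) = nE′(ν)E″(ν)/(E′(ν)²−1)·f(ν) − (n−2)E″(ν)/(ν(E′(ν)²−1))·g(ν) and g′(ν) = nνE″(ν)/(E′(ν)²−1)·f(ν) − (n−2)(E′(ν)²−1+νE′(ν)E″(ν))/(ν(E′(ν)²−1))·g(ν). Define F(ν) = (c₁/(n−2))·(1−E′(ν)²)^{−n/2}·f(ν) and G(ν) = −(c₂/n)·ν^{n−2}·(1−E′(ν)²)^{n/2−1}·g(ν). Then for all ν ∈ J: F′(ν) = −(c₁/c₂)·n·ν^{1−n}·E″(ν)·(1−E′(ν)²)^{−n}·G(ν) and G′(ν) = (c₂/c₁)·(n−2)·ν^{n−1}·E″(ν)·(1−E′(ν)²)^{n−2}·F(ν). -/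

import Mathlib

/-- Integrating-factor transformation (A.9): if `(f, g)` solve the spin-`n`
current system in normal form, then
`F = (c₁/(n−2))(1−E′²)^{−n/2} f` and `G = −(c₂/n)ν^{n−2}(1−E′²)^{n/2−1} g`
solve the symmetric system (A.11). -/
theorem stmt15 (n : ℝ) (hn0 : n ≠ 0) (hn2 : n ≠ 2)
    (c₁ c₂ : ℝ) (hc₁ : c₁ ≠ 0) (hc₂ : c₂ ≠ 0)
    (J : Set ℝ) (hJss : J ⊆ Set.Ioi (0 : ℝ)) (hJopen : IsOpen J)
    (hJconn : J.OrdConnected) (hJne : J.Nonempty)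
    (E : ℝ → ℝ) (hE : ContDiffOn ℝ 2 E J)
    (hE' : ∀ ν ∈ J, 0 < 1 - (deriv E ν) ^ 2)
    (f g : ℝ → ℝ) (hf : ContDiffOn ℝ 1 f J) (hg : ContDiffOn ℝ 1 g J)
    (hode1 : ∀ ν ∈ J,
      deriv f ν =
        n * deriv E ν * deriv (deriv E) ν / ((deriv E ν) ^ 2 - 1) * f ν
          - (n - 2) * deriv (deriv E) ν / (ν * ((deriv E ν) ^ 2 - 1)) * g ν)
    (hode2 : ∀ ν ∈ J,
      deriv g ν =
        n * ν * deriv (deriv E) ν / ((deriv E ν) ^ 2 - 1) * f ν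
          - (n - 2) * ((deriv E ν) ^ 2 - 1 + ν * deriv E ν * deriv (deriv E) ν)
              / (ν * ((deriv E ν) ^ 2 - 1)) * g ν)
    (F G : ℝ → ℝ)
    (hFdef : F = fun ν =>
      (c₁ / (n - 2)) * (1 - (deriv E ν) ^ 2) ^ (-n / 2) * f ν)
    (hGdef : G = fun ν =>
      -(c₂ / n) * ν ^ (n - 2) * (1 - (deriv E ν) ^ 2) ^ (n / 2 - 1) * g ν) :
    ∀ ν ∈ J,
      deriv F ν =
        -(c₁ / c₂) * n * ν ^ (1 - n) * deriv (deriv E) ν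
          * (1 - (deriv E ν) ^ 2) ^ (-n) * G ν ∧
      deriv G ν =
        (c₂ / c₁) * (n - 2) * ν ^ (n - 1) * deriv (deriv E) ν
          * (1 - (deriv E ν) ^ 2) ^ (n - 2) * F ν := by
  intro ν hν
  have hν0 : (0:ℝ) < ν := hJss hν
  have hmem : J ∈ nhds ν := hJopen.mem_nhds hν
  have hn2' : n - 2 ≠ 0 := sub_ne_zero.mpr hn2
  have hE1 : ContDiffOn ℝ 1 (deriv E) J := hE.deriv_of_isOpen hJopen (by norm_num)
  have hEd : HasDerivAt (deriv E) (deriv (deriv E) ν) ν :=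
    ((hE1.contDiffAt hmem).differentiableAt one_ne_zero).hasDerivAt
  have hfd : HasDerivAt f (deriv f ν) ν :=
    ((hf.contDiffAt hmem).differentiableAt one_ne_zero).hasDerivAt
  have hgd : HasDerivAt g (deriv g ν) ν :=
    ((hg.contDiffAt hmem).differentiableAt one_ne_zero).hasDerivAt
  have hP : 0 < 1 - (deriv E ν) ^ 2 := hE' ν hν
  set a := deriv E ν with ha
  set b := deriv (deriv E) ν with hb
  set P := 1 - a ^ 2 with hPdef
  have hQ : HasDerivAt (fun x => 1 - (deriv E x) ^ 2)
      (0 - 2 * a ^ 1 * b) ν :=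
    (hasDerivAt_const ν 1).sub (hEd.pow 2)
  -- derivative of F
  have hR1 : HasDerivAt (fun x => (1 - (deriv E x) ^ 2) ^ (-n/2 : ℝ))
      ((0 - 2 * a ^ 1 * b) * (-n/2) * P ^ (-n/2 - 1 : ℝ)) ν :=
    hQ.rpow_const (Or.inl hP.ne')
  have hF : HasDerivAt F
      ((c₁ / (n-2)) * ((0 - 2 * a ^ 1 * b) * (-n/2) * P ^ (-n/2 - 1 : ℝ)) * f ν
        + (c₁ / (n-2)) * P ^ (-n/2 : ℝ) * deriv f ν) ν := by
    rw [hFdef]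
    exact (hR1.const_mul (c₁ / (n-2))).mul hfd
  -- derivative of G
  have hR2 : HasDerivAt (fun x => (1 - (deriv E x) ^ 2) ^ (n/2 - 1 : ℝ))
      ((0 - 2 * a ^ 1 * b) * (n/2 - 1) * P ^ (n/2 - 1 - 1 : ℝ)) ν :=
    hQ.rpow_const (Or.inl hP.ne')
  have hNu : HasDerivAt (fun x : ℝ => x ^ (n - 2 : ℝ)) ((n-2) * ν ^ (n - 2 - 1 : ℝ)) ν :=
    Real.hasDerivAt_rpow_const (Or.inl hν0.ne')
  have hG : HasDerivAt G
      (((-(c₂/n) * ((n-2) * ν ^ (n-2-1 : ℝ)) * P ^ (n/2 - 1 : ℝ)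
          + -(c₂/n) * ν ^ (n-2 : ℝ) * ((0 - 2 * a ^ 1 * b) * (n/2 - 1) * P ^ (n/2 - 1 - 1 : ℝ)))
          * g ν)
        + (-(c₂/n) * ν ^ (n-2 : ℝ) * P ^ (n/2 - 1 : ℝ)) * deriv g ν) ν := by
    rw [hGdef]
    exact ((hNu.const_mul (-(c₂/n))).mul hR2).mul hgd
  -- rpow identities
  have hPne : P ≠ 0 := hP.ne'
  have e1 : P ^ (-n/2 : ℝ) = P ^ (-n/2 - 1 : ℝ) * P := by
    rw [← Real.rpow_add_one hPne]; congr 1; ring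
  have e2 : P ^ (-n : ℝ) * P ^ (n/2 - 1 : ℝ) = P ^ (-n/2 - 1 : ℝ) := by
    rw [← Real.rpow_add hP]; ring_nf
  have e3 : ν ^ (1-n : ℝ) * ν ^ (n-2 : ℝ) = ν⁻¹ := by
    rw [← Real.rpow_add hν0, show (1 - n + (n - 2) : ℝ) = -1 by ring, Real.rpow_neg_one]
  have e4 : ν ^ (n-2 : ℝ) = ν ^ (n-2-1 : ℝ) * ν := by
    rw [← Real.rpow_add_one hν0.ne']; congr 1; ring
  have e5 : P ^ (n/2 - 1 : ℝ) = P ^ (n/2 - 1 - 1 : ℝ) * P := by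
    rw [← Real.rpow_add_one hPne]; congr 1; ring
  have e6 : ν ^ (n-1 : ℝ) = ν ^ (n-2-1 : ℝ) * ν * ν := by
    rw [← Real.rpow_add_one hν0.ne', ← Real.rpow_add_one hν0.ne']; congr 1; ring
  have e7 : P ^ (n-2 : ℝ) * P ^ (-n/2 : ℝ) = P ^ (n/2 - 1 - 1 : ℝ) := by
    rw [← Real.rpow_add hP]; ring_nf
  constructor
  · rw [hF.deriv, hode1 ν hν, hGdef]
    simp only [← ha, ← hb, ← hPdef]
    have key : (a ^ 2 - 1) = -P := by rw [hPdef]; ring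
    rw [key, e1]
    rw [show (-(c₁ / c₂) * n * ν ^ (1 - n) * b * P ^ (-n : ℝ) *
        (-(c₂ / n) * ν ^ (n - 2) * P ^ (n / 2 - 1) * g ν)) =
        (c₁ / c₂ * c₂ / n * n) * (ν ^ (1-n : ℝ) * ν ^ (n-2 : ℝ)) * b *
        (P ^ (-n : ℝ) * P ^ (n/2 - 1 : ℝ)) * g ν by ring, e2, e3]
    field_simp
    ring
  · rw [hG.deriv, hode2 ν hν, hFdef]
    simp only [← ha, ← hb, ← hPdef]
    have key : (a ^ 2 - 1) = -P := by rw [hPdef]; ring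
    rw [key, e4, e5, e6]
    rw [show (c₂ / c₁ * (n - 2) * (ν ^ (n-2-1 : ℝ) * ν * ν) * b * P ^ (n - 2 : ℝ) *
        (c₁ / (n - 2) * P ^ (-n / 2 : ℝ) * f ν)) =
        (c₂ / c₁ * c₁ / (n-2) * (n-2)) * (ν ^ (n-2-1 : ℝ) * ν * ν) * b *
        (P ^ (n-2 : ℝ) * P ^ (-n/2 : ℝ)) * f ν by ring, e7]
    field_simp
    ring
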